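/- Let q₁, q₂, q be quadratic forms in the variables Y, Z only, f₁, f₂ cubic forms in Y, Z only, and p a quartic form in ℂ[X,Y,Z]. Suppose there exist linear forms ℓ₁', ℓ₂' and quadratic forms q₁', q₂' in ℂ[X,Y,Z] such that f₁ = X·q₁' + ℓ₂'·q₁, q = X·ℓ₁' + ℓ₂'·X, p = q₂·q₁' + q₂'·q₁, and f₂ = q₂·ℓ₁' + q₂'·X. Then there exists a linear form ℓ in Y, Z only such that q = 0, p = 0, f₁ = −ℓ·q₁, and f₂ = ℓ·q₂. (This is the computation of A ∩ T_ψZ in the second case of the fibre analysis of E₁.) -/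

import Mathlib

open MvPolynomial

abbrev R3 := MvPolynomial (Fin 3) ℂ

noncomputable def sub0 : Fin 3 → R3 := fun i => if i = 0 then 0 else X i

lemma sub0_homog (i : Fin 3) : (sub0 i).IsHomogeneous 1 := by
  unfold sub0
  split
  · exact MvPolynomial.isHomogeneous_zero _ _ _
  · exact MvPolynomial.isHomogeneous_X _ _

lemma sub0_vars (i : Fin 3) : (sub0 i).vars ⊆ {1, 2} := by
  unfold sub0
  fin_cases i <;> simp [MvPolynomial.vars_X]

lemma vars_aeval_sub0 (g : R3) : (aeval sub0 g).vars ⊆ {1, 2} := by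
  induction g using MvPolynomial.induction_on with
  | C a => simp
  | add f g hf hg =>
      rw [map_add]
      exact (MvPolynomial.vars_add_subset _ _).trans (Finset.union_subset hf hg)
  | mul_X f i hf =>
      rw [map_mul, aeval_X]
      exact (MvPolynomial.vars_mul _ _).trans (Finset.union_subset hf (sub0_vars i))

lemma dvd_sub_aeval_sub0 (g : R3) : (X 0 : R3) ∣ g - aeval sub0 g := by
  induction g using MvPolynomial.induction_on with
  | C a => simp
  | add f g hf hg =>
      rw [map_add]
      have h : f + g - (aeval sub0 f + aeval sub0 g)
          = (f - aeval sub0 f) + (g - aeval sub0 g) := by ring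
      rw [h]
      exact dvd_add hf hg
  | mul_X f i hf =>
      rw [map_mul, aeval_X]
      by_cases h : i = 0
      · subst h
        have h2 : sub0 (0 : Fin 3) = 0 := rfl
        rw [h2, mul_zero, sub_zero]
        exact ⟨f, mul_comm f _⟩
      · have h2 : sub0 i = X i := if_neg h
        rw [h2, show f * X i - aeval sub0 f * X i = (f - aeval sub0 f) * X i by ring]
        exact hf.mul_right _

lemma eq_zero_of_vars_of_dvd {g : R3} (hv : g.vars ⊆ {1, 2}) (hd : (X 0 : R3) ∣ g) :
    g = 0 := by
  obtain ⟨s, rfl⟩ := hd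
  by_contra hs
  have hs' : s ≠ 0 := by rintro rfl; simp at hs
  obtain ⟨d, hd⟩ := MvPolynomial.support_nonempty.mpr hs'
  have hc : coeff (Finsupp.single 0 1 + d) (X 0 * s) ≠ 0 := by
    rw [MvPolynomial.coeff_X_mul]
    exact MvPolynomial.mem_support_iff.mp hd
  have h0 : (0 : Fin 3) ∈ (X 0 * s : R3).vars := by
    rw [MvPolynomial.mem_vars]
    refine ⟨_, MvPolynomial.mem_support_iff.mpr hc, ?_⟩
    simp [Finsupp.mem_support_iff]
  have := hv h0
  simp at this

theorem stmt12 (q₁ q₂ q f₁ f₂ p : R3) (l₁' l₂' q₁' q₂' : R3)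
    (hq₁ : q₁.IsHomogeneous 2) (hq₁v : q₁.vars ⊆ {1, 2})
    (hq₂ : q₂.IsHomogeneous 2) (hq₂v : q₂.vars ⊆ {1, 2})
    (hq : q.IsHomogeneous 2) (hqv : q.vars ⊆ {1, 2})
    (hf₁ : f₁.IsHomogeneous 3) (hf₁v : f₁.vars ⊆ {1, 2})
    (hf₂ : f₂.IsHomogeneous 3) (hf₂v : f₂.vars ⊆ {1, 2})
    (hp : p.IsHomogeneous 4)
    (hl₁' : l₁'.IsHomogeneous 1) (hl₂' : l₂'.IsHomogeneous 1)
    (hq₁' : q₁'.IsHomogeneous 2) (hq₂' : q₂'.IsHomogeneous 2)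
    (e₁ : f₁ = X 0 * q₁' + l₂' * q₁)
    (e₂ : q = X 0 * l₁' + l₂' * X 0)
    (e₃ : p = q₂ * q₁' + q₂' * q₁)
    (e₄ : f₂ = q₂ * l₁' + q₂' * X 0) :
    ∃ l : R3, l.IsHomogeneous 1 ∧ l.vars ⊆ {1, 2} ∧
      q = 0 ∧ p = 0 ∧ f₁ = -(l * q₁) ∧ f₂ = l * q₂ := by
  have hX0 : (X 0 : R3) ≠ 0 := MvPolynomial.X_ne_zero 0
  set m : R3 := aeval sub0 l₂' with hm
  obtain ⟨t, ht⟩ := dvd_sub_aeval_sub0 l₂'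
  rw [← hm] at ht
  -- q = 0
  have hq0 : q = 0 := eq_zero_of_vars_of_dvd hqv ⟨l₁' + l₂', by rw [e₂]; ring⟩
  -- l₁' = -l₂'
  have hl : l₁' = -l₂' := by
    have h : X 0 * (l₁' + l₂') = 0 := by
      rw [show X 0 * (l₁' + l₂') = X 0 * l₁' + l₂' * X 0 by ring, ← e₂, hq0]
    rcases mul_eq_zero.mp h with h | h
    · exact absurd h hX0
    · linear_combination h
  -- f₁ = m * q₁ and q₁' = -(t * q₁)
  have h1 : f₁ - m * q₁ = X 0 * (q₁' + t * q₁) := by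
    have : l₂' = m + X 0 * t := by linear_combination ht
    rw [e₁, this]; ring
  have h1v : (f₁ - m * q₁).vars ⊆ {1, 2} := by
    rw [sub_eq_add_neg]
    refine (MvPolynomial.vars_add_subset _ _).trans (Finset.union_subset hf₁v ?_)
    rw [MvPolynomial.vars_neg]
    exact (MvPolynomial.vars_mul _ _).trans
      (Finset.union_subset (vars_aeval_sub0 _) hq₁v)
  have h1z : f₁ - m * q₁ = 0 := eq_zero_of_vars_of_dvd h1v ⟨_, h1⟩
  have hf₁' : f₁ = m * q₁ := by linear_combination h1z
  have hq₁'' : q₁' = -(t * q₁) := by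
    have := h1z ▸ h1
    rcases mul_eq_zero.mp this.symm with h | h
    · exact absurd h hX0
    · linear_combination h
  -- f₂ = -(m * q₂) and q₂' = t * q₂
  have h2 : f₂ + m * q₂ = X 0 * (q₂' - t * q₂) := by
    have hml : l₂' = m + X 0 * t := by linear_combination ht
    rw [e₄, hl, hml]; ring
  have h2v : (f₂ + m * q₂).vars ⊆ {1, 2} := by
    refine (MvPolynomial.vars_add_subset _ _).trans (Finset.union_subset hf₂v ?_)
    exact (MvPolynomial.vars_mul _ _).trans
      (Finset.union_subset (vars_aeval_sub0 _) hq₂v)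
  have h2z : f₂ + m * q₂ = 0 := eq_zero_of_vars_of_dvd h2v ⟨_, h2⟩
  have hf₂' : f₂ = -(m * q₂) := by linear_combination h2z
  have hq₂'' : q₂' = t * q₂ := by
    have := h2z ▸ h2
    rcases mul_eq_zero.mp this.symm with h | h
    · exact absurd h hX0
    · linear_combination h
  refine ⟨-m, ?_, ?_, hq0, ?_, ?_, ?_⟩
  · have h := (hl₂'.aeval sub0 sub0_homog).neg
    exact h
  · rw [MvPolynomial.vars_neg]; exact vars_aeval_sub0 _
  · rw [e₃, hq₁'', hq₂'']; ring
  · rw [hf₁']; ring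
  · rw [hf₂']; ring
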